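/- Let G be a γ_t-critical graph of order n with γ_t(G) = n − Δ(G) and δ(G) ≥ 2, let v be a vertex of maximum degree Δ(G), and let S = V(G) − N[v]. If every connected component of G[S] is a path P_2, say the components are the edges u_1w_1, …, u_tw_t, then for every u ∈ S we have N(u) ∩ N(v) ≠ ∅, and N(v) is the disjoint union of the sets N(u_1) − {w_1}, N(w_1) − {u_1}, …, N(u_t) − {w_t}, N(w_t) − {u_t}. -/

import Mathlib

open scoped Classical

namespace SimpleGraph

variable {V : Type*}

/-- A set `S` is a total dominating set if every vertex is adjacent to a vertex of `S`. -/
def IsTotalDomSet (G : SimpleGraph V) (S : Set V) : Prop :=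
  ∀ v : V, ∃ u ∈ S, G.Adj v u

/-- The total domination number: minimum cardinality of a total dominating set. -/
noncomputable def totalDomNum (G : SimpleGraph V) [Fintype V] : ℕ :=
  sInf {n : ℕ | ∃ S : Finset V, G.IsTotalDomSet ↑S ∧ S.card = n}

/-- The graph obtained by deleting the vertex `v`. -/
def deleteVert (G : SimpleGraph V) (v : V) : SimpleGraph {u : V // u ≠ v} :=
  G.induce {u : V | u ≠ v}

/-- A support vertex is a vertex adjacent to a leaf (a vertex of degree one). -/
noncomputable def IsSupportVertex (G : SimpleGraph V) [Fintype V] (v : V) : Prop :=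
  ∃ u : V, G.Adj v u ∧ G.degree u = 1

/-- `G` is total domination vertex critical: it has no isolated vertex and deleting any
vertex that is not a support vertex decreases the total domination number. -/
noncomputable def IsTotalDomCritical (G : SimpleGraph V) [Fintype V] : Prop :=
  (∀ v : V, 0 < G.degree v) ∧
  ∀ v : V, ¬ G.IsSupportVertex v →
    (G.deleteVert v).totalDomNum < G.totalDomNum

private lemma totalDomNum_le_card {V : Type*} [Fintype V] (G : SimpleGraph V)
    (D : Finset V) (h : G.IsTotalDomSet ↑D) : G.totalDomNum ≤ D.card :=
  Nat.sInf_le ⟨D, h, rfl⟩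

theorem stmt10 {V : Type*} [Fintype V] (G : SimpleGraph V)
    (hcrit : G.IsTotalDomCritical)
    (hγ : G.totalDomNum = Fintype.card V - G.maxDegree)
    (hδ : 2 ≤ G.minDegree)
    (v : V) (hv : G.degree v = G.maxDegree)
    (S : Set V) (hS : S = ({v} ∪ G.neighborSet v)ᶜ)
    (t : ℕ) (u w : Fin t → V)
    (hinj : Function.Injective (fun p : Fin t × Bool => if p.2 then u p.1 else w p.1))
    (hSeq : S = Set.range u ∪ Set.range w)
    (hedges : ∀ i : Fin t, G.Adj (u i) (w i))
    (hcomp : ∀ x ∈ S, ∀ y ∈ S,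
      (G.Adj x y ↔ ∃ i : Fin t, (x = u i ∧ y = w i) ∨ (x = w i ∧ y = u i))) :
    (∀ x ∈ S, (G.neighborSet x ∩ G.neighborSet v).Nonempty) ∧
    Pairwise (Function.onFun Disjoint fun p : Fin t × Bool =>
      if p.2 then G.neighborSet (u p.1) \ {w p.1} else G.neighborSet (w p.1) \ {u p.1}) ∧
    G.neighborSet v = ⋃ p : Fin t × Bool,
      (if p.2 then G.neighborSet (u p.1) \ {w p.1} else G.neighborSet (w p.1) \ {u p.1}) := by
  classical
  set e : Fin t × Bool → V := fun p => if p.2 then u p.1 else w p.1 with he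
  have hinj' : Function.Injective e := hinj
  -- basic facts about S
  have hSmem : ∀ x : V, x ∈ S ↔ (x ≠ v ∧ ¬ G.Adj v x) := by
    intro x
    rw [hS]
    simp [Set.mem_compl_iff, Set.mem_union]
  have hSrange : S = Set.range e := by
    rw [hSeq]
    ext x
    constructor
    · rintro (⟨i, rfl⟩ | ⟨i, rfl⟩)
      · exact ⟨(i, true), rfl⟩
      · exact ⟨(i, false), rfl⟩
    · rintro ⟨⟨i, b⟩, rfl⟩
      cases b
      · exact Or.inr ⟨i, rfl⟩
      · exact Or.inl ⟨i, rfl⟩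
  have heS : ∀ p : Fin t × Bool, e p ∈ S := by
    intro p; rw [hSrange]; exact ⟨p, rfl⟩
  have hdeg2 : ∀ z : V, 2 ≤ G.degree z := fun z => le_trans hδ (G.minDegree_le_degree z)
  have hpartner : ∀ p : Fin t × Bool, G.Adj (e p) (e (p.1, !p.2)) := by
    rintro ⟨i, b⟩
    cases b
    · simpa [he] using (hedges i).symm
    · simpa [he] using hedges i
  have hbar_inj : ∀ r p : Fin t × Bool, e (r.1, !r.2) = e (p.1, !p.2) → r = p := by
    rintro ⟨i, a⟩ ⟨j, b⟩ h
    have h2 := hinj' h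
    simp only [Prod.mk.injEq] at h2
    cases a <;> cases b <;> simp_all
  -- any neighbor of a vertex of S is its partner or a neighbor of v
  have hadjS : ∀ (p : Fin t × Bool) (y : V),
      G.Adj (e p) y → y = e (p.1, !p.2) ∨ G.Adj v y := by
    intro p y hxy
    by_cases hyv : y = v
    · exact absurd ((hSmem (e p)).mp (heS p)).2 (by subst hyv; simp [hxy.symm])
    by_cases hvy : G.Adj v y
    · exact Or.inr hvy
    have hyS : y ∈ S := (hSmem y).mpr ⟨hyv, hvy⟩
    obtain ⟨i, hi⟩ := (hcomp (e p) (heS p) y hyS).mp hxy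
    rcases hi with ⟨h1, h2⟩ | ⟨h1, h2⟩
    · have : p = (i, true) := hinj' (by simpa [he] using h1)
      subst this
      exact Or.inl (by simpa [he] using h2)
    · have : p = (i, false) := hinj' (by simpa [he] using h1)
      subst this
      exact Or.inl (by simpa [he] using h2)
  -- trichotomy
  have htri : ∀ z : V, z = v ∨ G.Adj v z ∨ z ∈ S := by
    intro z
    by_cases h1 : z = v
    · exact Or.inl h1
    by_cases h2 : G.Adj v z
    · exact Or.inr (Or.inl h2)
    · exact Or.inr (Or.inr ((hSmem z).mpr ⟨h1, h2⟩))
  -- the finset of endpoints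
  set P : Finset V := Finset.image e Finset.univ with hP
  have hPcard : P.card = 2 * t := by
    rw [hP, Finset.card_image_of_injective _ hinj', Finset.card_univ]
    simp [Fintype.card_prod, mul_comm]
  have hPS : ∀ x ∈ P, x ∈ S := by
    intro x hx
    rw [hP, Finset.mem_image] at hx
    obtain ⟨p, _, rfl⟩ := hx
    exact heS p
  have hePmem : ∀ p : Fin t × Bool, e p ∈ P := by
    intro p; rw [hP]; exact Finset.mem_image_of_mem e (Finset.mem_univ p)
  -- cardinality of V
  have hcardV : Fintype.card V = 1 + G.degree v + 2 * t := by
    have huniv : (Finset.univ : Finset V) = insert v (G.neighborFinset v ∪ P) := by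
      ext z
      simp only [Finset.mem_univ, Finset.mem_insert, Finset.mem_union, mem_neighborFinset,
        true_iff]
      rcases htri z with h | h | h
      · exact Or.inl h
      · exact Or.inr (Or.inl h)
      · refine Or.inr (Or.inr ?_)
        rw [hSrange] at h
        obtain ⟨p, rfl⟩ := h
        exact hePmem p
    have hvnot : v ∉ G.neighborFinset v ∪ P := by
      simp only [Finset.mem_union, mem_neighborFinset]
      rintro (h | h)
      · exact G.irrefl h
      · exact absurd ((hSmem v).mp (hPS v h)).1 (by simp)
    have hdisj : Disjoint (G.neighborFinset v) P := by
      rw [Finset.disjoint_left]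
      intro a ha haP
      rw [mem_neighborFinset] at ha
      exact ((hSmem a).mp (hPS a haP)).2 ha
    rw [← Finset.card_univ, huniv, Finset.card_insert_of_notMem hvnot,
      Finset.card_union_of_disjoint hdisj, hPcard, ← card_neighborFinset_eq_degree]
    ring
  -- total domination number
  have hTD : G.totalDomNum = 2 * t + 1 := by
    have hm : G.maxDegree ≤ G.degree v := le_of_eq hv.symm
    omega
  -- the sets in the statement
  have hA : ∀ p : Fin t × Bool,
      (if p.2 then G.neighborSet (u p.1) \ {w p.1} else G.neighborSet (w p.1) \ {u p.1})
        = G.neighborSet (e p) \ {e (p.1, !p.2)} := by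
    rintro ⟨i, b⟩
    cases b <;> simp [he]
  -- Part 1
  have part1 : ∀ x ∈ S, (G.neighborSet x ∩ G.neighborSet v).Nonempty := by
    intro x hx
    rw [hSrange] at hx
    obtain ⟨r, rfl⟩ := hx
    have h2 : 1 < (G.neighborFinset (e r)).card := by
      rw [card_neighborFinset_eq_degree]; exact hdeg2 (e r)
    obtain ⟨y, hy, hne⟩ := Finset.exists_mem_ne h2 (e (r.1, !r.2))
    rw [mem_neighborFinset] at hy
    rcases hadjS r y hy with h | h
    · exact absurd h hne
    · exact ⟨y, hy, h⟩
  -- Part 2 : pairwise disjointness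
  have part2 : Pairwise (Function.onFun Disjoint fun p : Fin t × Bool =>
      if p.2 then G.neighborSet (u p.1) \ {w p.1} else G.neighborSet (w p.1) \ {u p.1}) := by
    intro p q hpq
    have ht1 : 1 ≤ t := p.1.pos
    simp only [Function.onFun, hA]
    rw [Set.disjoint_left]
    rintro x ⟨hxp1, hxp2⟩ ⟨hxq1, hxq2⟩
    rw [mem_neighborSet] at hxp1 hxq1
    simp only [Set.mem_singleton_iff] at hxp2 hxq2
    have hvx : G.Adj v x := by
      rcases hadjS p x hxp1 with h | h
      · exact absurd h hxp2
      · exact h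
    -- build a small total dominating set
    set R : Finset V := {e (p.1, !p.2), e (q.1, !q.2)} with hR
    have hpbqb : e (p.1, !p.2) ≠ e (q.1, !q.2) := by
      intro h
      exact hpq (hbar_inj p q h)
    have hRcard : R.card = 2 := Finset.card_pair hpbqb
    have hRsub : R ⊆ P := by
      intro a ha
      rw [hR, Finset.mem_insert, Finset.mem_singleton] at ha
      rcases ha with rfl | rfl
      · exact hePmem _
      · exact hePmem _
    set D : Finset V := insert v (insert x (P \ R)) with hD
    have hDdom : G.IsTotalDomSet ↑D := by
      intro z
      rcases htri z with rfl | hz | hz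
      · exact ⟨x, by simp [hD], hvx⟩
      · exact ⟨v, by simp [hD], hz.symm⟩
      · rw [hSrange] at hz
        obtain ⟨r, rfl⟩ := hz
        by_cases hr : e (r.1, !r.2) ∈ R
        · rw [hR, Finset.mem_insert, Finset.mem_singleton] at hr
          rcases hr with hr | hr
          · have : r = p := hbar_inj r p hr
            subst this
            exact ⟨x, by simp [hD], hxp1⟩
          · have : r = q := hbar_inj r q hr
            subst this
            exact ⟨x, by simp [hD], hxq1⟩
        · refine ⟨e (r.1, !r.2), ?_, hpartner r⟩
          simp only [hD, Finset.coe_insert, Set.mem_insert_iff, Finset.coe_sdiff,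
            Set.mem_diff, Finset.mem_coe]
          exact Or.inr (Or.inr ⟨hePmem _, hr⟩)
    have hcard : D.card ≤ 2 * t := by
      have h1 : (P \ R).card = 2 * t - 2 := by
        rw [Finset.card_sdiff_of_subset hRsub, hPcard, hRcard]
      calc D.card ≤ (insert x (P \ R)).card + 1 := Finset.card_insert_le _ _
        _ ≤ (P \ R).card + 1 + 1 := by
            have := Finset.card_insert_le x (P \ R); omega
        _ ≤ 2 * t := by omega
    have := totalDomNum_le_card G D hDdom
    omega
  refine ⟨part1, part2, ?_⟩
  -- Part 3
  have hnotsupp : ¬ G.IsSupportVertex v := by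
    rintro ⟨z, _, h1⟩
    have := hdeg2 z
    omega
  have hlt := hcrit.2 v hnotsupp
  rw [hTD] at hlt
  have hdelAdj : ∀ a b : {x : V // x ≠ v}, (G.deleteVert v).Adj a b ↔ G.Adj ↑a ↑b := by
    intro a b
    rfl
  -- the universe is a total dominating set of G - v
  have hexists : (G.deleteVert v).IsTotalDomSet ↑(Finset.univ : Finset {x : V // x ≠ v}) := by
    intro a
    have h2 : 1 < (G.neighborFinset (a : V)).card := by
      rw [card_neighborFinset_eq_degree]; exact hdeg2 _
    obtain ⟨y, hy, hne⟩ := Finset.exists_mem_ne h2 v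
    rw [mem_neighborFinset] at hy
    exact ⟨⟨y, hne⟩, by simp, (hdelAdj a ⟨y, hne⟩).mpr hy⟩
  have hnonempty : {n : ℕ | ∃ D : Finset {x : V // x ≠ v},
      (G.deleteVert v).IsTotalDomSet ↑D ∧ D.card = n}.Nonempty :=
    ⟨_, Finset.univ, hexists, rfl⟩
  obtain ⟨D₀, hD₀, hD₀card⟩ := Nat.sInf_mem hnonempty
  rw [show sInf {n : ℕ | ∃ D : Finset {x : V // x ≠ v},
      (G.deleteVert v).IsTotalDomSet ↑D ∧ D.card = n} = (G.deleteVert v).totalDomNum from rfl]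
      at hD₀card
  have hD₀le : D₀.card ≤ 2 * t := by omega
  -- every vertex of D₀ lies in S
  have hD₀S : ∀ y ∈ D₀, (y : V) ∈ S := by
    by_contra hcon
    push_neg at hcon
    obtain ⟨y₀, hy₀D, hy₀S⟩ := hcon
    have hy₀adj : G.Adj v ↑y₀ := by
      by_contra h
      exact hy₀S ((hSmem _).mpr ⟨y₀.2, h⟩)
    set D₁ : Finset V := D₀.image Subtype.val with hD₁
    have hdom1 : G.IsTotalDomSet ↑D₁ := by
      intro z
      by_cases hz : z = v
      · subst hz
        exact ⟨↑y₀, by simp [hD₁]; exact ⟨y₀.2, hy₀D⟩, hy₀adj⟩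
      · obtain ⟨b, hb, hadjb⟩ := hD₀ ⟨z, hz⟩
        refine ⟨↑b, ?_, (hdelAdj ⟨z, hz⟩ b).mp hadjb⟩
        simp only [hD₁, Finset.coe_image, Set.mem_image, Finset.mem_coe]
        exact ⟨b, hb, rfl⟩
    have h1 := totalDomNum_le_card G D₁ hdom1
    have h2 : D₁.card ≤ D₀.card := Finset.card_image_le
    omega
  -- conclude
  ext x
  simp only [Set.mem_iUnion]
  constructor
  · intro hx
    rw [mem_neighborSet] at hx
    have hxv : x ≠ v := fun h => G.irrefl (h ▸ hx)
    obtain ⟨b, hb, hadjb⟩ := hD₀ ⟨x, hxv⟩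
    have hbS := hD₀S b hb
    have hadjxb : G.Adj x ↑b := (hdelAdj ⟨x, hxv⟩ b).mp hadjb
    rw [hSrange] at hbS
    obtain ⟨r, hr⟩ := hbS
    refine ⟨r, ?_⟩
    rw [hA r]
    refine ⟨?_, ?_⟩
    · rw [mem_neighborSet, hr]
      exact hadjxb.symm
    · simp only [Set.mem_singleton_iff]
      intro h
      exact ((hSmem _).mp (heS (r.1, !r.2))).2 (h ▸ hx)
  · rintro ⟨p, hp⟩
    rw [hA p] at hp
    obtain ⟨h1, h2⟩ := hp
    rw [mem_neighborSet] at h1 ⊢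
    rcases hadjS p x h1 with h | h
    · exact absurd h h2
    · exact h

end SimpleGraph
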